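/- Let (X_n) be a sequence of random variables on (Ω,ℱ) that is independent in Peng's sense under the upper expectation 𝔼 of a set 𝒫 of probability measures: for each n, 𝔼[φ(X_1,…,X_{n−1}, X_n)] = 𝔼[ψ(X_1,…,X_{n−1})] where ψ(x) = 𝔼[φ(x, X_n)], for all bounded Lipschitz φ. Then (X_n) is pseudo-independent: for every P ∈ 𝒫, every n, and every bounded Lipschitz φ : ℝ → ℝ, E_P[φ(X_n) | σ(X_1,…,X_{n−1})] ≤ 𝔼[φ(X_n)] P-almost surely. -/

import Mathlib

open MeasureTheory Set Filter Metric
open scoped ENNReal NNReal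

/-- biSup in ℝ over a set, bounded above termwise, dominates each term. -/
lemma aux_le_biSup {α : Type*} {s : Set α} {F : α → ℝ} {M : ℝ} (h : ∀ a ∈ s, F a ≤ M)
    {a : α} (ha : a ∈ s) : F a ≤ ⨆ b ∈ s, F b := by
  have hbdd : BddAbove (Set.range fun b => ⨆ _ : b ∈ s, F b) := ⟨max M 0, by
    rintro _ ⟨b, rfl⟩
    exact Real.iSup_le (fun hb => (h b hb).trans (le_max_left _ _)) (le_max_right _ _)⟩
  calc F a = ⨆ _ : a ∈ s, F a := (ciSup_pos (f := fun _ : a ∈ s => F a) ha).symm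
  _ ≤ ⨆ b ∈ s, F b := le_ciSup hbdd a

/-- A bounded measurable real function is integrable w.r.t. a finite measure. -/
lemma aux_integrable {Ω : Type*} [MeasurableSpace Ω] {Q : Measure Ω} [IsFiniteMeasure Q]
    {h : Ω → ℝ} (hm : Measurable h) {C : ℝ} (hC : ∀ ω, |h ω| ≤ C) : Integrable h Q :=
  ⟨hm.aestronglyMeasurable,
    HasFiniteIntegral.of_bounded (C := C) (Eventually.of_forall fun ω => by
      simpa [Real.norm_eq_abs] using hC ω)⟩

/-- Product of a [0,1]-valued Lipschitz function with a bounded Lipschitz function is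
Lipschitz on the product space. -/
lemma aux_lip_prod {E : Type*} [PseudoMetricSpace E] (g : E → ℝ) (h : ℝ → ℝ)
    (Kg Kh : NNReal) (hg : LipschitzWith Kg g) (hh : LipschitzWith Kh h)
    (B : ℝ) (hg01 : ∀ x, 0 ≤ g x ∧ g x ≤ 1) (hB : ∀ y, |h y| ≤ B) :
    LipschitzWith (Kg * Real.toNNReal B + Kh) (fun p : E × ℝ => g p.1 * h p.2) := by
  apply LipschitzWith.of_dist_le_mul
  rintro ⟨x, y⟩ ⟨x', y'⟩
  have hd : dist (x, y) (x', y') = max (dist x x') (dist y y') := rfl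
  have h1 : dist (g x * h y) (g x' * h y') ≤ |g x - g x'| * |h y| + |g x'| * |h y - h y'| := by
    rw [Real.dist_eq]
    have : g x * h y - g x' * h y' = (g x - g x') * h y + g x' * (h y - h y') := by ring
    rw [this]
    refine (abs_add_le _ _).trans ?_
    rw [abs_mul, abs_mul]
  have h2 : |g x - g x'| ≤ Kg * dist x x' := by
    have := hg.dist_le_mul x x'
    rwa [Real.dist_eq] at this
  have h3 : |h y - h y'| ≤ Kh * dist y y' := by
    have := hh.dist_le_mul y y'
    rwa [Real.dist_eq] at this
  have hB' : (0:ℝ) ≤ B := le_trans (abs_nonneg _) (hB y)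
  have h4 : |g x'| ≤ 1 := by
    rw [abs_of_nonneg (hg01 x').1]; exact (hg01 x').2
  have h5 : dist x x' ≤ dist (x,y) (x',y') := by rw [hd]; exact le_max_left _ _
  have h6 : dist y y' ≤ dist (x,y) (x',y') := by rw [hd]; exact le_max_right _ _
  have hKB : ((Kg * Real.toNNReal B + Kh : NNReal) : ℝ) = (Kg:ℝ) * B + Kh := by
    push_cast
    rw [Real.coe_toNNReal _ hB']
  rw [hKB]
  have e1 : |g x - g x'| * |h y| ≤ ((Kg:ℝ) * dist (x,y) (x',y')) * B :=
    mul_le_mul (h2.trans (by nlinarith [Kg.coe_nonneg])) (hB y) (abs_nonneg _) (by positivity)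
  have e2 : |g x'| * |h y - h y'| ≤ 1 * ((Kh:ℝ) * dist (x,y) (x',y')) :=
    mul_le_mul h4 (h3.trans (by nlinarith [Kh.coe_nonneg])) (abs_nonneg _) zero_le_one
  calc dist (g x * h y) (g x' * h y') ≤ |g x - g x'| * |h y| + |g x'| * |h y - h y'| := h1
    _ ≤ ((Kg:ℝ) * dist (x,y) (x',y')) * B + 1 * ((Kh:ℝ) * dist (x,y) (x',y')) := add_le_add e1 e2
    _ = ((Kg:ℝ) * B + Kh) * dist (x,y) (x',y') := by ring

/-- Comparison of two finite Borel measures on a metric space from comparison of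
lintegrals of nonnegative Lipschitz functions bounded by 1. -/
lemma aux_meas_le {E : Type*} [MeasurableSpace E] [PseudoMetricSpace E] [BorelSpace E]
    (μ₁ μ₂ : Measure E) [IsFiniteMeasure μ₁] [IsFiniteMeasure μ₂]
    (h : ∀ g : E → ℝ, (∃ K, LipschitzWith K g) → (∀ x, 0 ≤ g x ∧ g x ≤ 1) →
      ∫⁻ x, ENNReal.ofReal (g x) ∂μ₁ ≤ ∫⁻ x, ENNReal.ofReal (g x) ∂μ₂)
    {B : Set E} (hB : MeasurableSet B) : μ₁ B ≤ μ₂ B := by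
  have hclosed : ∀ F : Set E, IsClosed F → μ₁ F ≤ μ₂ F := by
    intro F hF
    rcases F.eq_empty_or_nonempty with rfl | hFne
    · simp
    set g : ℕ → E → ℝ := fun k x => max (1 - (k+1) * infDist x F) 0 with hg
    have hglip : ∀ k : ℕ, LipschitzWith ((k+1 : NNReal)) (g k) := by
      intro k
      have l1 : LipschitzWith (k+1 : NNReal) (fun t : ℝ => max (1 - (k+1) * t) 0) := by
        apply LipschitzWith.of_dist_le_mul
        intro a b
        rw [Real.dist_eq, Real.dist_eq]
        refine (abs_max_sub_max_le_abs _ _ _).trans ?_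
        have : (1 - (k+1) * a) - (1 - (k+1) * b) = (k+1) * (b - a) := by ring
        rw [this, abs_mul, abs_sub_comm]
        have : |(k+1 : ℝ)| = ((k+1 : NNReal) : ℝ) := by
          push_cast; rw [abs_of_nonneg]; positivity
        rw [this]
      have l2 : LipschitzWith 1 (fun x : E => infDist x F) := lipschitz_infDist_pt F
      have := l1.comp l2
      rw [mul_one] at this
      exact this
    have hg01 : ∀ k x, 0 ≤ g k x ∧ g k x ≤ 1 := by
      intro k x
      constructor
      · exact le_max_right _ _
      · apply max_le _ zero_le_one
        have := infDist_nonneg (x := x) (s := F)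
        nlinarith
    have hmono : ∀ k, μ₁ F ≤ ∫⁻ x, ENNReal.ofReal (g k x) ∂μ₁ := by
      intro k
      have : μ₁ F = ∫⁻ x, F.indicator (fun _ => (1:ℝ≥0∞)) x ∂μ₁ := by
        rw [lintegral_indicator hF.measurableSet]
        simp
      rw [this]
      apply lintegral_mono
      intro x
      by_cases hx : x ∈ F
      · simp only [hx, indicator_of_mem]
        have : g k x = 1 := by
          simp only [hg]
          rw [infDist_zero_of_mem hx]
          simp
        rw [this]; simp
      · simp [hx]
    have hlim : Tendsto (fun k => ∫⁻ x, ENNReal.ofReal (g k x) ∂μ₂) atTop (nhds (μ₂ F)) := by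
      have : μ₂ F = ∫⁻ x, F.indicator (fun _ => (1:ℝ≥0∞)) x ∂μ₂ := by
        rw [lintegral_indicator hF.measurableSet]; simp
      rw [this]
      apply tendsto_lintegral_filter_of_dominated_convergence (fun _ => (1:ℝ≥0∞))
      · exact Eventually.of_forall fun k =>
          ((ENNReal.continuous_ofReal.comp (hglip k).continuous).measurable)
      · refine Eventually.of_forall fun k => Eventually.of_forall fun x => ?_
        exact ENNReal.ofReal_le_one.2 (hg01 k x).2
      · simp [lintegral_const]
      · refine Eventually.of_forall fun x => ?_
        by_cases hx : x ∈ F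
        · have : ∀ k : ℕ, ENNReal.ofReal (g k x) = 1 := by
            intro k
            simp only [hg]
            rw [infDist_zero_of_mem hx]
            simp
          simp only [this, hx, indicator_of_mem]
          exact tendsto_const_nhds
        · have hd : 0 < infDist x F := (hF.notMem_iff_infDist_pos hFne).1 hx
          have hev : ∀ᶠ k : ℕ in atTop, ENNReal.ofReal (g k x) = 0 := by
            have : ∀ᶠ k : ℕ in atTop, (1:ℝ) ≤ (k+1) * infDist x F := by
              obtain ⟨N, hN⟩ := exists_nat_gt (1 / infDist x F)
              refine eventually_atTop.2 ⟨N, fun k hk => ?_⟩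
              rw [div_lt_iff₀ hd] at hN
              have : (N:ℝ) ≤ (k:ℝ) + 1 := by
                have h9 : N ≤ k + 1 := by omega
                exact_mod_cast h9
              nlinarith
            filter_upwards [this] with k hk
            have : g k x = 0 := by
              simp only [hg]
              rw [max_eq_right]; linarith
            simp [this]
          simp only [hx, indicator_of_notMem, not_false_iff]
          exact Tendsto.congr' (hev.mono fun k hk => hk.symm) tendsto_const_nhds
    refine ge_of_tendsto' hlim fun k => ?_
    exact (hmono k).trans (h (g k) ⟨_, hglip k⟩ (hg01 k))
  by_contra hcon
  push_neg at hcon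
  obtain ⟨F, hFB, hFc, hlt⟩ := hB.exists_lt_isClosed_of_ne_top (measure_ne_top μ₁ B) hcon
  exact absurd (((hclosed F hFc).trans (measure_mono hFB)).trans_lt hlt) (lt_irrefl _)

/-- The generated σ-algebra of the first n-1 variables equals the comap of the joint map. -/
lemma aux_sigma_eq {Ω : Type*} [MeasurableSpace Ω] (X : ℕ → Ω → ℝ) (n : ℕ) :
    (⨆ i ∈ Finset.Icc 1 (n-1), MeasurableSpace.comap (X i) inferInstance)
      = MeasurableSpace.comap (fun ω (i : Fin (n-1)) => X (i+1) ω) MeasurableSpace.pi := by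
  apply le_antisymm
  · refine iSup_le fun i => iSup_le fun hi => ?_
    simp only [Finset.mem_Icc] at hi
    have hlt : i - 1 < n - 1 := by omega
    have : X i = (fun x : Fin (n-1) → ℝ => x ⟨i-1, hlt⟩) ∘ (fun ω (j : Fin (n-1)) => X (j+1) ω) := by
      funext ω
      simp only [Function.comp_apply]
      congr 1
      omega
    rw [this, ← MeasurableSpace.comap_comp]
    exact MeasurableSpace.comap_mono (le_iSup
      (fun j : Fin (n-1) => MeasurableSpace.comap (fun x : Fin (n-1) → ℝ => x j) inferInstance) _)
  · rw [MeasurableSpace.pi, MeasurableSpace.comap_iSup]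
    refine iSup_le fun j => ?_
    rw [MeasurableSpace.comap_comp]
    have hj : ((j : ℕ) + 1) ∈ Finset.Icc 1 (n-1) := by
      simp only [Finset.mem_Icc]; omega
    exact le_trans (le_of_eq rfl) (le_iSup₂
      (f := fun i (_ : i ∈ Finset.Icc 1 (n-1)) => MeasurableSpace.comap (X i) inferInstance) _ hj)

theorem stmt19 {Ω : Type*} [MeasurableSpace Ω] (𝒫₀ : Set (Measure Ω)) (hne : 𝒫₀.Nonempty)
    (hP : ∀ P ∈ 𝒫₀, IsProbabilityMeasure P)
    (X : ℕ → Ω → ℝ) (hXm : ∀ n, Measurable (X n))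
    (hindep : ∀ n : ℕ, 1 ≤ n → ∀ φ : ((Fin (n-1) → ℝ) × ℝ) → ℝ,
      (∃ K, LipschitzWith K φ) → (∃ M, ∀ p, |φ p| ≤ M) →
      (⨆ P ∈ 𝒫₀, ∫ ω, φ (fun i => X (i+1) ω, X n ω) ∂P)
        = ⨆ P ∈ 𝒫₀, ∫ ω, (⨆ Q ∈ 𝒫₀, ∫ ω', φ (fun i => X (i+1) ω, X n ω') ∂Q) ∂P) :
    ∀ P ∈ 𝒫₀, ∀ n : ℕ, 1 ≤ n → ∀ φ : ℝ → ℝ,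
      (∃ K, LipschitzWith K φ) → (∃ M, ∀ x, |φ x| ≤ M) →
      ∀ᵐ ω ∂P,
        (P[fun ω' => φ (X n ω') |
            ⨆ i ∈ Finset.Icc 1 (n-1), MeasurableSpace.comap (X i) inferInstance]) ω
          ≤ ⨆ Q ∈ 𝒫₀, ∫ ω', φ (X n ω') ∂Q := by
  intro P hPmem n hn φ hφlip' hφbdd
  obtain ⟨Kφ, hφlip⟩ := hφlip'
  obtain ⟨M, hφM⟩ := hφbdd
  haveI : IsProbabilityMeasure P := hP P hPmem
  set f : Ω → ℝ := fun ω => φ (X n ω) with hf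
  have hfm : Measurable f := hφlip.continuous.measurable.comp (hXm n)
  have hfM : ∀ ω, |f ω| ≤ M := fun ω => hφM _
  have hM0 : 0 ≤ M := le_trans (abs_nonneg _) (hφM 0)
  set c : ℝ := ⨆ Q ∈ 𝒫₀, ∫ ω', φ (X n ω') ∂Q with hc
  set Y : Ω → (Fin (n-1) → ℝ) := fun ω i => X (i+1) ω with hY
  have hYm : Measurable Y := measurable_pi_lambda _ fun i => hXm _
  have hmeq : (⨆ i ∈ Finset.Icc 1 (n-1), MeasurableSpace.comap (X i) inferInstance)
      = MeasurableSpace.comap Y MeasurableSpace.pi := aux_sigma_eq X n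
  rw [hmeq]
  have hm : MeasurableSpace.comap Y MeasurableSpace.pi ≤ ‹MeasurableSpace Ω› := hYm.comap_le
  -- integral bounds
  have hintQ : ∀ Q : Measure Ω, IsProbabilityMeasure Q → |∫ ω, f ω ∂Q| ≤ M := by
    intro Q hQ
    have := norm_integral_le_of_norm_le_const (μ := Q) (f := f) (C := M)
      (Eventually.of_forall fun ω => by simpa [Real.norm_eq_abs] using hfM ω)
    simpa [Real.norm_eq_abs, measure_univ] using this
  have hc_ge : ∀ Q ∈ 𝒫₀, ∫ ω, f ω ∂Q ≤ c :=
    fun Q hQ => aux_le_biSup (fun Q' hQ' => (abs_le.1 (hintQ Q' (hP Q' hQ'))).2) hQ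
  have hcM : -M ≤ c := by
    obtain ⟨Q₀, hQ₀⟩ := hne
    exact ((abs_le.1 (hintQ Q₀ (hP Q₀ hQ₀))).1).trans (hc_ge Q₀ hQ₀)
  -- Step 1: key testing inequality
  have hkey : ∀ g : (Fin (n-1) → ℝ) → ℝ, (∃ K, LipschitzWith K g) →
      (∀ x, 0 ≤ g x ∧ g x ≤ 1) →
      ∫ ω, g (Y ω) * (f ω - c) ∂P ≤ 0 := by
    intro g hglip' hg01
    obtain ⟨Kg, hglip⟩ := hglip'
    set ψ : ((Fin (n-1) → ℝ) × ℝ) → ℝ := fun p => g p.1 * (φ p.2 - c) with hψ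
    have hφc : LipschitzWith Kφ (fun y => φ y - c) := fun x y => by
      simpa [edist_sub_right] using hφlip x y
    have hψlip : LipschitzWith (Kg * Real.toNNReal (M + |c|) + Kφ) ψ :=
      aux_lip_prod g (fun y => φ y - c) Kg Kφ hglip hφc (M + |c|) hg01
        (fun y => (abs_sub _ _).trans (add_le_add (hφM y) le_rfl))
    have hψbdd : ∀ p, |ψ p| ≤ M + |c| := by
      intro p
      rw [hψ, abs_mul]
      calc |g p.1| * |φ p.2 - c| ≤ 1 * (M + |c|) := by
            apply mul_le_mul _ ((abs_sub _ _).trans (add_le_add (hφM _) le_rfl)) (abs_nonneg _)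
              zero_le_one
            rw [abs_of_nonneg (hg01 p.1).1]; exact (hg01 p.1).2
        _ = M + |c| := one_mul _
    have hEq := hindep n hn ψ ⟨_, hψlip⟩ ⟨M + |c|, hψbdd⟩
    have hψm : Measurable (fun ω => ψ (Y ω, X n ω)) :=
      hψlip.continuous.measurable.comp ((hYm).prodMk (hXm n))
    -- RHS ≤ 0
    have hRHS : (⨆ P' ∈ 𝒫₀, ∫ ω, (⨆ Q ∈ 𝒫₀, ∫ ω', ψ (fun i => X (i+1) ω, X n ω') ∂Q) ∂P') ≤ 0 := by
      refine Real.iSup_le (fun P' => Real.iSup_le (fun hP' => ?_) le_rfl) le_rfl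
      apply integral_nonpos
      intro ω
      refine Real.iSup_le (fun Q => Real.iSup_le (fun hQ => ?_) le_rfl) le_rfl
      haveI : IsProbabilityMeasure Q := hP Q hQ
      have : ∫ ω', ψ (fun i => X (i+1) ω, X n ω') ∂Q
          = g (Y ω) * ((∫ ω', f ω' ∂Q) - c) := by
        rw [hψ]
        simp only
        have hint : Integrable (fun ω' => φ (X n ω')) Q :=
          aux_integrable (hφlip.continuous.measurable.comp (hXm n) :
            Measurable fun ω' => φ (X n ω')) (fun ω' => hφM _)
        rw [integral_const_mul, integral_sub hint (integrable_const c), integral_const]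
        simp [measure_univ]
        rfl
      rw [this]
      exact mul_nonpos_iff.2 (Or.inl ⟨(hg01 (Y ω)).1, sub_nonpos.2 (hc_ge Q hQ)⟩)
    -- LHS bound
    have hLHS : ∫ ω, ψ (fun i => X (i+1) ω, X n ω) ∂P
        ≤ ⨆ P' ∈ 𝒫₀, ∫ ω, ψ (fun i => X (i+1) ω, X n ω) ∂P' := by
      refine aux_le_biSup (M := M + |c|)
        (F := fun P' => ∫ ω, ψ (fun i => X (i+1) ω, X n ω) ∂P') (fun P' hP' => ?_) hPmem
      haveI : IsProbabilityMeasure P' := hP P' hP'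
      have := norm_integral_le_of_norm_le_const (μ := P')
        (f := fun ω => ψ (fun i => X (i+1) ω, X n ω)) (C := M + |c|)
        (Eventually.of_forall fun ω => by simpa [Real.norm_eq_abs] using hψbdd _)
      rw [Real.norm_eq_abs] at this
      simp only [measureReal_def, measure_univ, ENNReal.toReal_one, mul_one] at this
      exact (abs_le.1 this).2
    have h0 : ∫ ω, ψ (fun i => X (i+1) ω, X n ω) ∂P ≤ 0 := hLHS.trans (hEq.le.trans hRHS)
    exact h0
  -- Step 2: compare pushforward measures
  set μ₁ : Measure (Fin (n-1) → ℝ) :=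
    Measure.map Y (P.withDensity fun ω => ENNReal.ofReal (f ω + M)) with hμ₁
  set μ₂ : Measure (Fin (n-1) → ℝ) :=
    Measure.map Y (P.withDensity fun ω => ENNReal.ofReal (c + M)) with hμ₂
  have hdens₁ : Measurable (fun ω => ENNReal.ofReal (f ω + M)) :=
    (hfm.add_const M).ennreal_ofReal
  have hdens₂ : Measurable (fun _ : Ω => ENNReal.ofReal (c + M)) := measurable_const
  haveI : IsFiniteMeasure μ₁ := by
    constructor
    rw [hμ₁, Measure.map_apply hYm MeasurableSet.univ, preimage_univ, withDensity_apply _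
      MeasurableSet.univ, Measure.restrict_univ]
    calc ∫⁻ ω, ENNReal.ofReal (f ω + M) ∂P ≤ ∫⁻ _, ENNReal.ofReal (M + M) ∂P :=
          lintegral_mono fun ω => ENNReal.ofReal_le_ofReal (by
            have := (abs_le.1 (hfM ω)).2; linarith)
      _ < ⊤ := by simp [lintegral_const, measure_univ]
  haveI : IsFiniteMeasure μ₂ := by
    constructor
    rw [hμ₂, Measure.map_apply hYm MeasurableSet.univ, preimage_univ, withDensity_apply _
      MeasurableSet.univ, Measure.restrict_univ]
    simp [lintegral_const, measure_univ]
  have hcM' : 0 ≤ c + M := by linarith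
  have hfM' : ∀ ω, 0 ≤ f ω + M := fun ω => by have := (abs_le.1 (hfM ω)).1; linarith
  have hcomp : ∀ B : Set (Fin (n-1) → ℝ), MeasurableSet B → μ₁ B ≤ μ₂ B := by
    intro B hB
    refine aux_meas_le μ₁ μ₂ ?_ hB
    intro g hglip' hg01
    obtain ⟨Kg, hglip⟩ := hglip'
    have hgY : Measurable fun ω => g (Y ω) := hglip.continuous.measurable.comp hYm
    have hgY0 : ∀ ω, 0 ≤ g (Y ω) := fun ω => (hg01 _).1
    have e₁ : ∫⁻ x, ENNReal.ofReal (g x) ∂μ₁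
        = ENNReal.ofReal (∫ ω, (f ω + M) * g (Y ω) ∂P) := by
      rw [hμ₁, lintegral_map (hglip.continuous.measurable.ennreal_ofReal) hYm,
        lintegral_withDensity_eq_lintegral_mul P hdens₁
          ((by exact hglip.continuous.measurable.ennreal_ofReal.comp hYm :
            Measurable fun ω => ENNReal.ofReal (g (Y ω))))]
      have : ∀ ω, (ENNReal.ofReal (f ω + M)) * ENNReal.ofReal (g (Y ω))
          = ENNReal.ofReal ((f ω + M) * g (Y ω)) := fun ω =>
        (ENNReal.ofReal_mul (hfM' ω)).symm
      simp only [Pi.mul_apply, this]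
      rw [← ofReal_integral_eq_lintegral_ofReal]
      · exact aux_integrable ((hfm.add_const M).mul hgY) (C := (M + M) * 1) fun ω => by
          rw [abs_mul]
          apply mul_le_mul _ _ (abs_nonneg _) (by linarith)
          · rw [abs_of_nonneg (hfM' ω)]
            have := (abs_le.1 (hfM ω)).2; linarith
          · rw [abs_of_nonneg (hgY0 ω)]; exact (hg01 _).2
      · exact Eventually.of_forall fun ω => mul_nonneg (hfM' ω) (hgY0 ω)
    have e₂ : ∫⁻ x, ENNReal.ofReal (g x) ∂μ₂
        = ENNReal.ofReal (∫ ω, (c + M) * g (Y ω) ∂P) := by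
      rw [hμ₂, lintegral_map (hglip.continuous.measurable.ennreal_ofReal) hYm,
        lintegral_withDensity_eq_lintegral_mul P hdens₂
          ((by exact hglip.continuous.measurable.ennreal_ofReal.comp hYm :
            Measurable fun ω => ENNReal.ofReal (g (Y ω))))]
      have : ∀ ω, (ENNReal.ofReal (c + M)) * ENNReal.ofReal (g (Y ω))
          = ENNReal.ofReal ((c + M) * g (Y ω)) := fun ω =>
        (ENNReal.ofReal_mul hcM').symm
      simp only [Pi.mul_apply, this]
      rw [← ofReal_integral_eq_lintegral_ofReal]
      · exact aux_integrable (measurable_const.mul hgY) (C := (c + M) * 1) fun ω => by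
          rw [abs_mul]
          apply mul_le_mul _ _ (abs_nonneg _) (by linarith)
          · rw [abs_of_nonneg hcM']
          · rw [abs_of_nonneg (hgY0 ω)]; exact (hg01 _).2
      · exact Eventually.of_forall fun ω => mul_nonneg hcM' (hgY0 ω)
    rw [e₁, e₂]
    apply ENNReal.ofReal_le_ofReal
    have hsplit : ∀ ω, (f ω + M) * g (Y ω) = g (Y ω) * (f ω - c) + (c + M) * g (Y ω) := by
      intro ω; ring
    have hint1 : Integrable (fun ω => g (Y ω) * (f ω - c)) P :=
      aux_integrable (hgY.mul (hfm.sub_const c)) (C := 1 * (M + |c|)) fun ω => by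
        rw [abs_mul]
        apply mul_le_mul _ ((abs_sub _ _).trans (add_le_add (hfM ω) le_rfl)) (abs_nonneg _)
          zero_le_one
        rw [abs_of_nonneg (hgY0 ω)]; exact (hg01 _).2
    have hint2 : Integrable (fun ω => (c + M) * g (Y ω)) P :=
      aux_integrable (measurable_const.mul hgY) (C := (c + M) * 1) fun ω => by
        rw [abs_mul]
        apply mul_le_mul _ _ (abs_nonneg _) (by linarith)
        · rw [abs_of_nonneg hcM']
        · rw [abs_of_nonneg (hgY0 ω)]; exact (hg01 _).2
    calc ∫ ω, (f ω + M) * g (Y ω) ∂P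
        = ∫ ω, (g (Y ω) * (f ω - c) + (c + M) * g (Y ω)) ∂P := by
          congr 1; funext ω; exact hsplit ω
      _ = (∫ ω, g (Y ω) * (f ω - c) ∂P) + ∫ ω, (c + M) * g (Y ω) ∂P :=
          integral_add hint1 hint2
      _ ≤ 0 + ∫ ω, (c + M) * g (Y ω) ∂P :=
          add_le_add (hkey g ⟨_, hglip⟩ hg01) le_rfl
      _ = ∫ ω, (c + M) * g (Y ω) ∂P := zero_add _
  -- Step 3: set integral inequality over m-measurable sets
  have hfint : Integrable f P := aux_integrable hfm hfM
  have hset : ∀ s : Set Ω, MeasurableSet[MeasurableSpace.comap Y MeasurableSpace.pi] s →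
      ∫ ω in s, f ω ∂P ≤ ∫ ω in s, c ∂P := by
    intro s hs
    rw [MeasurableSpace.measurableSet_comap] at hs
    obtain ⟨B, hBmeas, rfl⟩ := hs
    have h₁ : μ₁ B = ∫⁻ ω in Y ⁻¹' B, ENNReal.ofReal (f ω + M) ∂P := by
      rw [hμ₁, Measure.map_apply hYm hBmeas, withDensity_apply _ (hYm hBmeas)]
    have h₂ : μ₂ B = ∫⁻ ω in Y ⁻¹' B, ENNReal.ofReal (c + M) ∂P := by
      rw [hμ₂, Measure.map_apply hYm hBmeas, withDensity_apply _ (hYm hBmeas)]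
    have hi₁ : Integrable (fun ω => f ω + M) (P.restrict (Y ⁻¹' B)) :=
      (aux_integrable (hfm.add_const M) (C := M + M) fun ω => by
        rw [abs_of_nonneg (hfM' ω)]; have := (abs_le.1 (hfM ω)).2; linarith).restrict
    have e₁ : ENNReal.ofReal (∫ ω in Y ⁻¹' B, (f ω + M) ∂P)
        = ∫⁻ ω in Y ⁻¹' B, ENNReal.ofReal (f ω + M) ∂P :=
      ofReal_integral_eq_lintegral_ofReal hi₁ (Eventually.of_forall fun ω => hfM' ω)
    have e₂ : ENNReal.ofReal (∫ ω in Y ⁻¹' B, (c + M) ∂P)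
        = ∫⁻ ω in Y ⁻¹' B, ENNReal.ofReal (c + M) ∂P :=
      ofReal_integral_eq_lintegral_ofReal (integrable_const _)
        (Eventually.of_forall fun _ => hcM')
    have hle : ENNReal.ofReal (∫ ω in Y ⁻¹' B, (f ω + M) ∂P)
        ≤ ENNReal.ofReal (∫ ω in Y ⁻¹' B, (c + M) ∂P) := by
      rw [e₁, e₂, ← h₁, ← h₂]
      exact hcomp B hBmeas
    have hle' : ∫ ω in Y ⁻¹' B, (f ω + M) ∂P ≤ ∫ ω in Y ⁻¹' B, (c + M) ∂P := by
      have hr : 0 ≤ ∫ ω in Y ⁻¹' B, (c + M) ∂P :=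
        integral_nonneg fun ω => hcM'
      exact (ENNReal.ofReal_le_ofReal_iff hr).1 hle
    have ha : ∫ ω in Y ⁻¹' B, (f ω + M) ∂P
        = (∫ ω in Y ⁻¹' B, f ω ∂P) + ∫ ω in Y ⁻¹' B, (M:ℝ) ∂P :=
      integral_add hfint.restrict (integrable_const _)
    have hb : ∫ ω in Y ⁻¹' B, (c + M : ℝ) ∂P
        = (∫ ω in Y ⁻¹' B, (c:ℝ) ∂P) + ∫ ω in Y ⁻¹' B, (M:ℝ) ∂P := by
      rw [integral_const, integral_const, integral_const, smul_add]
    rw [ha, hb] at hle'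
    linarith
  -- Step 4: conclude via conditional expectation
  haveI : SigmaFinite (P.trim hm) := by
    haveI : IsFiniteMeasure (P.trim hm) := isFiniteMeasure_trim hm
    infer_instance
  set gce : Ω → ℝ := P[fun ω' => φ (X n ω') | MeasurableSpace.comap Y MeasurableSpace.pi]
    with hgce
  have hgsm : StronglyMeasurable[MeasurableSpace.comap Y MeasurableSpace.pi] gce :=
    stronglyMeasurable_condExp
  have hgint : Integrable gce P := integrable_condExp
  set d : Ω → ℝ := fun ω => c - gce ω with hd
  have hdsm : StronglyMeasurable[MeasurableSpace.comap Y MeasurableSpace.pi] d :=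
    (stronglyMeasurable_const).sub hgsm
  have hdint : Integrable d (P.trim hm) :=
    ((integrable_const c).sub hgint).trim hm hdsm
  have hae : 0 ≤ᵐ[P.trim hm] d := by
    apply ae_nonneg_of_forall_setIntegral_nonneg hdint
    intro s hs _
    rw [← setIntegral_trim hm hdsm hs]
    have h1 : ∫ ω in s, d ω ∂P = (∫ ω in s, c ∂P) - ∫ ω in s, gce ω ∂P := by
      rw [hd]
      exact integral_sub (integrable_const c).restrict hgint.restrict
    have h2 : ∫ ω in s, gce ω ∂P = ∫ ω in s, f ω ∂P := setIntegral_condExp hm hfint hs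
    rw [h1, h2]
    linarith [hset s hs]
  have hae' : 0 ≤ᵐ[P] d := ae_le_of_ae_le_trim hae
  filter_upwards [hae'] with ω hω
  have : gce ω ≤ c := by
    rw [hd] at hω
    simpa using hω
  exact this
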